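/- For every n > 1 and every α > 0, the function v_α(x) = [ 2(n+1) / ( (2^n (n+1) α^{1−n})^{1/(n+1)} + (n−1) x )^2 ]^{1/(n−1)} is positive on [0,∞), satisfies v_α''(x) = v_α(x)^n for all x > 0, satisfies the flux boundary condition v_α'(0) = −α, and satisfies v_α(x) → 0 as x → ∞. -/

import Mathlib

open Real Filter

/-- The explicit steady state `v_α` of the dimensionless morphogen model
`v'' = v^n` on `(0,∞)` with `v'(0) = -α` and `v(∞) = 0`: it is positive on
`[0,∞)`, satisfies the ODE for `x > 0`, the flux condition at `0`, and decays
at infinity. -/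
theorem steady_state_properties (n α : ℝ) (hn : 1 < n) (hα : 0 < α)
    (v : ℝ → ℝ)
    (hv : v = fun x : ℝ =>
      (2 * (n + 1) /
        (((2:ℝ) ^ n * (n + 1) * α ^ (1 - n)) ^ (1 / (n + 1)) + (n - 1) * x) ^ 2)
        ^ (1 / (n - 1))) :
    (∀ x : ℝ, 0 ≤ x → 0 < v x) ∧
    (∀ x : ℝ, 0 < x → deriv (deriv v) x = v x ^ n) ∧
    deriv v 0 = -α ∧
    Tendsto v atTop (nhds 0) := by
  have hn1 : (0:ℝ) < n - 1 := by linarith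
  have hn1' : n - 1 ≠ 0 := ne_of_gt hn1
  have hnp : (0:ℝ) < n + 1 := by linarith
  have hM : (0:ℝ) < (2:ℝ) ^ n * (n + 1) * α ^ (1 - n) :=
    mul_pos (mul_pos (Real.rpow_pos_of_pos two_pos n) hnp) (Real.rpow_pos_of_pos hα _)
  set b : ℝ := ((2:ℝ) ^ n * (n + 1) * α ^ (1 - n)) ^ (1 / (n + 1)) with hbdef
  have hb : 0 < b := Real.rpow_pos_of_pos hM _
  set C : ℝ := (2 * (n + 1)) ^ (1 / (n - 1)) with hCdef
  have hC : 0 < C := Real.rpow_pos_of_pos (by linarith) _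
  set p : ℝ := 2 / (n - 1) with hpdef
  have hp : 0 < p := by rw [hpdef]; positivity
  -- closed form
  have key : ∀ x : ℝ, 0 < b + (n - 1) * x →
      v x = C * (b + (n - 1) * x) ^ (-p) := by
    intro x hx
    simp only [hv]
    rw [show ((b + (n - 1) * x) ^ 2 : ℝ) = (b + (n - 1) * x) ^ ((2:ℕ) : ℝ) from
        (Real.rpow_natCast _ 2).symm]
    rw [Real.div_rpow (by linarith : (0:ℝ) ≤ 2 * (n + 1)) (Real.rpow_nonneg hx.le _),
      ← Real.rpow_mul hx.le]
    rw [show ((2:ℕ) : ℝ) * (1 / (n - 1)) = p by rw [hpdef]; push_cast; ring]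
    rw [Real.rpow_neg hx.le, div_eq_mul_inv, hCdef]
  -- derivative of the basic building block
  have hder : ∀ (c q x : ℝ), 0 < b + (n - 1) * x →
      HasDerivAt (fun z => c * (b + (n - 1) * z) ^ q)
        (c * q * (n - 1) * (b + (n - 1) * x) ^ (q - 1)) x := by
    intro c q x hx
    have h1 : HasDerivAt (fun z : ℝ => b + (n - 1) * z) (n - 1) x := by
      simpa using ((hasDerivAt_id x).const_mul (n - 1)).const_add b
    have h2 : HasDerivAt (fun z : ℝ => (b + (n - 1) * z) ^ q)
        (q * (b + (n - 1) * x) ^ (q - 1) * (n - 1)) x :=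
      by have h0 := (Real.hasDerivAt_rpow_const (p := q) (Or.inl hx.ne')).comp x h1; exact h0
    have h3 : HasDerivAt (fun y => c * (b + (n - 1) * y) ^ q)
        (c * (q * (b + (n - 1) * x) ^ (q - 1) * (n - 1))) x := HasDerivAt.const_mul c h2
    convert h3 using 1
    ring
  have hopen : ∀ x : ℝ, 0 < b + (n - 1) * x → ∀ᶠ z in nhds x, 0 < b + (n - 1) * z := by
    intro x hx
    have hcont : Continuous fun z : ℝ => b + (n - 1) * z := by continuity
    exact (hcont.tendsto x).eventually (eventually_gt_nhds hx)
  have hderiv : ∀ x : ℝ, 0 < b + (n - 1) * x →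
      deriv v x = C * (-p) * (n - 1) * (b + (n - 1) * x) ^ (-p - 1) := by
    intro x hx
    have hev : v =ᶠ[nhds x] fun z => C * (b + (n - 1) * z) ^ (-p) := by
      filter_upwards [hopen x hx] with z hz using key z hz
    exact ((hder C (-p) x hx).congr_of_eventuallyEq hev).deriv
  have hderiv2 : ∀ x : ℝ, 0 < b + (n - 1) * x →
      deriv (deriv v) x =
        C * (-p) * (n - 1) * (-p - 1) * (n - 1) * (b + (n - 1) * x) ^ (-p - 1 - 1) := by
    intro x hx
    have hev : deriv v =ᶠ[nhds x]
        fun z => (C * (-p) * (n - 1)) * (b + (n - 1) * z) ^ (-p - 1) := by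
      filter_upwards [hopen x hx] with z hz using hderiv z hz
    have h := ((hder (C * (-p) * (n - 1)) (-p - 1) x hx).congr_of_eventuallyEq hev).deriv
    rw [h]
  refine ⟨?_, ?_, ?_, ?_⟩
  · -- positivity
    intro x hx
    have hy : 0 < b + (n - 1) * x := add_pos_of_pos_of_nonneg hb (mul_nonneg hn1.le hx)
    rw [key x hy]
    exact mul_pos hC (Real.rpow_pos_of_pos hy _)
  · -- ODE
    intro x hx
    have hy : 0 < b + (n - 1) * x := add_pos_of_pos_of_nonneg hb (mul_nonneg hn1.le hx.le)
    rw [hderiv2 x hy, key x hy]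
    rw [Real.mul_rpow hC.le (Real.rpow_nonneg hy.le _), ← Real.rpow_mul hy.le]
    have hCn : C ^ n = 2 * (n + 1) * C := by
      rw [hCdef, ← Real.rpow_mul (by linarith : (0:ℝ) ≤ 2 * (n + 1))]
      rw [show 1 / (n - 1) * n = 1 + 1 / (n - 1) by field_simp; try ring]
      rw [Real.rpow_add (by linarith : (0:ℝ) < 2 * (n + 1)), Real.rpow_one]
    have hexp : -p - 1 - 1 = -p * n := by rw [hpdef]; field_simp; try ring
    have hcoef : C * (-p) * (n - 1) * (-p - 1) * (n - 1) = 2 * (n + 1) * C := by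
      rw [hpdef]; field_simp; try ring
    rw [hexp, hcoef, hCn]
  · -- flux
    have hb0 : 0 < b + (n - 1) * 0 := by simpa using hb
    rw [hderiv 0 hb0]
    rw [show b + (n - 1) * 0 = b by ring]
    have hbpow : b ^ (-p - 1) = 2 ^ (-(n / (n - 1))) * (n + 1) ^ (-(1 / (n - 1))) * α := by
      rw [hbdef, ← Real.rpow_mul hM.le]
      rw [show 1 / (n + 1) * (-p - 1) = -(1 / (n - 1)) by rw [hpdef]; field_simp; ring]
      rw [Real.mul_rpow (by positivity) (Real.rpow_nonneg hα.le _),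
        Real.mul_rpow (by positivity) (by positivity),
        ← Real.rpow_mul (by norm_num : (0:ℝ) ≤ 2),
        ← Real.rpow_mul hα.le]
      rw [show (1 - n) * -(1 / (n - 1)) = 1 by field_simp; try ring, Real.rpow_one,
        show n * -(1 / (n - 1)) = -(n / (n - 1)) by ring]
    rw [hbpow, hCdef, Real.mul_rpow (by norm_num : (0:ℝ) ≤ 2) hnp.le]
    have ha2 : (2:ℝ) ^ (1 / (n - 1)) * 2 ^ (-(n / (n - 1))) = 1 / 2 := by
      rw [← Real.rpow_add two_pos]
      rw [show 1 / (n - 1) + -(n / (n - 1)) = -1 by field_simp; try ring]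
      rw [show (-1 : ℝ) = ((-1 : ℤ) : ℝ) by norm_num, Real.rpow_intCast]
      norm_num
    have ha3 : ((n:ℝ) + 1) ^ (1 / (n - 1)) * (n + 1) ^ (-(1 / (n - 1))) = 1 := by
      rw [← Real.rpow_add hnp]; simp
    calc (2:ℝ) ^ (1 / (n - 1)) * (n + 1) ^ (1 / (n - 1)) * (-p) * (n - 1) *
          (2 ^ (-(n / (n - 1))) * (n + 1) ^ (-(1 / (n - 1))) * α)
        = ((2:ℝ) ^ (1 / (n - 1)) * 2 ^ (-(n / (n - 1)))) *
          (((n:ℝ) + 1) ^ (1 / (n - 1)) * (n + 1) ^ (-(1 / (n - 1)))) *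
          ((-p) * (n - 1)) * α := by ring
      _ = (1 / 2) * 1 * ((-p) * (n - 1)) * α := by rw [ha2, ha3]
      _ = -α := by rw [hpdef]; field_simp; try ring
  · -- decay
    have h1 : Tendsto (fun x : ℝ => b + (n - 1) * x) atTop atTop := by
      apply tendsto_atTop_add_const_left
      exact Tendsto.const_mul_atTop hn1 tendsto_id
    have h2 : Tendsto (fun x : ℝ => (b + (n - 1) * x) ^ (-p)) atTop (nhds 0) :=
      (tendsto_rpow_neg_atTop hp).comp h1
    have h3 := h2.const_mul C
    rw [mul_zero] at h3
    refine Tendsto.congr' ?_ h3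
    filter_upwards [eventually_ge_atTop (0:ℝ)] with x hx
    exact (key x (add_pos_of_pos_of_nonneg hb (mul_nonneg hn1.le hx))).symm
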